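/- Let b1, b2 > 0 and define γ0 : (0, ∞) → ℝ by γ0(x) = b1 x log(1 + 1/x) − b2 x. Then for all x > y > 0 one has γ0(x) − γ0(y) ≤ b1 (x − y) log(1 + 1/(x − y)) − b2 (x − y). Moreover, if l0 > 0 satisfies b1 log(1 + 1/l0) ≤ b2/2, then for all x > y > 0 with x − y > l0 one has γ0(x) − γ0(y) ≤ −(b2/2)(x − y). -/
import Mathlib


open Set Filter MeasureTheory

/-- log(1+1/t) is antitone on positives. -/
lemma log_one_add_inv_anti {a b : ℝ} (ha : 0 < a) (hab : a ≤ b) :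
    Real.log (1 + 1 / b) ≤ Real.log (1 + 1 / a) := by
  have hb : 0 < b := lt_of_lt_of_le ha hab
  apply Real.log_le_log (by positivity)
  have : 1 / b ≤ 1 / a := one_div_le_one_div_of_le ha hab
  linarith

/-- Subadditivity of t ↦ t log(1+1/t) on positives. -/
lemma key_subadd {u v : ℝ} (hu : 0 < u) (hv : 0 < v) :
    (u + v) * Real.log (1 + 1 / (u + v)) ≤
      u * Real.log (1 + 1 / u) + v * Real.log (1 + 1 / v) := by
  have h1 : Real.log (1 + 1 / (u + v)) ≤ Real.log (1 + 1 / u) :=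
    log_one_add_inv_anti hu (by linarith)
  have h2 : Real.log (1 + 1 / (u + v)) ≤ Real.log (1 + 1 / v) :=
    log_one_add_inv_anti hv (by linarith)
  nlinarith [mul_le_mul_of_nonneg_left h1 hu.le, mul_le_mul_of_nonneg_left h2 hv.le]

/-- Example 3.6(1) of the paper: the drift γ0(x) = b1 x log(1+1/x) − b2 x satisfies
γ0(x) − γ0(y) ≤ b1 (x−y) log(1+1/(x−y)) − b2 (x−y) for x > y > 0; moreover if
b1 log(1+1/l0) ≤ b2/2 then γ0(x) − γ0(y) ≤ −(b2/2)(x−y) whenever x − y > l0. -/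
theorem stmt_13
    (b1 b2 : ℝ) (hb1 : 0 < b1) (hb2 : 0 < b2)
    (γ0 : ℝ → ℝ) (hγ0 : ∀ x, 0 < x → γ0 x = b1 * x * Real.log (1 + 1 / x) - b2 * x) :
    (∀ x y : ℝ, 0 < y → y < x →
      γ0 x - γ0 y ≤ b1 * (x - y) * Real.log (1 + 1 / (x - y)) - b2 * (x - y)) ∧
    ∀ l0 : ℝ, 0 < l0 → b1 * Real.log (1 + 1 / l0) ≤ b2 / 2 →
      ∀ x y : ℝ, 0 < y → y < x → l0 < x - y →
        γ0 x - γ0 y ≤ -(b2 / 2) * (x - y) := by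
  have main : ∀ x y : ℝ, 0 < y → y < x →
      γ0 x - γ0 y ≤ b1 * (x - y) * Real.log (1 + 1 / (x - y)) - b2 * (x - y) := by
    intro x y hy hyx
    have hx : 0 < x := hy.trans hyx
    have hd : 0 < x - y := by linarith
    rw [hγ0 x hx, hγ0 y hy]
    have h := key_subadd hd hy
    have hxy : x - y + y = x := by ring
    rw [hxy] at h
    nlinarith [mul_le_mul_of_nonneg_left h hb1.le]
  refine ⟨main, ?_⟩
  intro l0 hl0 hl x y hy hyx hd
  have hdpos : 0 < x - y := hl0.trans hd
  have h1 := main x y hy hyx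
  have h2 : Real.log (1 + 1 / (x - y)) ≤ Real.log (1 + 1 / l0) :=
    log_one_add_inv_anti hl0 hd.le
  nlinarith [mul_le_mul_of_nonneg_left h2 hb1.le]
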